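/- Let σ act on S = F[x_1,…,x_m,y_1,…,y_m] as described, let f ∈ S^σ and let a_1,…,a_m be nonnegative integers. (i) If the monomial y_1^{a_1}⋯y_m^{a_m} has nonzero coefficient in f, then a_i is even for every i ∈ {1,…,m}. (ii) If the monomial y_1^{a_1}⋯y_{m−1}^{a_{m−1}} y_m x_m has nonzero coefficient in f, then a_i is even for every i ∈ {1,…,m−1}. -/

import Mathlib

/-!
STATEMENT 2: With σ acting on S = F[x_1,…,x_m,y_1,…,y_m] (char F = 2) by σ(x_j) = x_j,
σ(y_j) = y_j + x_j, let f ∈ S^σ and a_1,…,a_m be nonnegative integers.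
(i) If y_1^{a_1}⋯y_m^{a_m} appears in f (i.e. has nonzero coefficient), then every a_i is even.
(ii) If y_1^{a_1}⋯y_{m−1}^{a_{m−1}} y_m x_m appears in f, then a_i is even for every i < m.
Variables: `X (Sum.inl j)` is x_{j+1} and `X (Sum.inr j)` is y_{j+1} (0-indexed); the
exponent vectors are encoded as finitely supported functions, and the last index
(⟨m−1,_⟩ : Fin m) plays the role of the subscript m.
-/

open MvPolynomial

lemma coeff_pderiv_aux {R : Type*} [CommSemiring R] {ι : Type*} (n : ι)
    (ν : ι →₀ ℕ) (g : MvPolynomial ι R) :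
    coeff ν (pderiv n g) = ((ν n : R) + 1) * coeff (ν + Finsupp.single n 1) g := by
  classical
  induction g using MvPolynomial.induction_on' with
  | add p q hp hq => rw [map_add, coeff_add, coeff_add, hp, hq]; ring
  | monomial d r =>
    rw [pderiv_monomial, coeff_monomial, coeff_monomial]
    by_cases h : d = ν + Finsupp.single n 1
    · subst h
      have h1 : ν + Finsupp.single n 1 - Finsupp.single n 1 = ν := by
        ext j
        simp only [Finsupp.tsub_apply, Finsupp.add_apply, Finsupp.single_apply]
        omega
      have h2 : (((ν + Finsupp.single n 1 : _ →₀ ℕ)) n : R) = (ν n : R) + 1 := by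
        simp only [Finsupp.add_apply, Finsupp.single_eq_same]
        push_cast
        ring
      rw [h1, if_pos rfl, if_pos rfl, h2, mul_comm]
    · rw [if_neg h, mul_zero]
      by_cases h0 : d n = 0
      · split <;> simp [h0]
      · have hne : ¬ d - Finsupp.single n 1 = ν := by
          intro hd
          apply h
          ext j
          have hj := DFunLike.congr_fun hd j
          simp only [Finsupp.tsub_apply, Finsupp.single_apply] at hj
          simp only [Finsupp.add_apply, Finsupp.single_apply]
          rcases eq_or_ne n j with rfl | h'
          · simp at hj ⊢; omega
          · simp [h'] at hj ⊢; omega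
        rw [if_neg hne]


theorem stmt_2 (F : Type) [Field F] [CharP F 2] (m : ℕ) (hm : 1 ≤ m)
    (σ : MvPolynomial (Fin m ⊕ Fin m) F ≃ₐ[F] MvPolynomial (Fin m ⊕ Fin m) F)
    (hx : ∀ j : Fin m, σ (X (Sum.inl j)) = X (Sum.inl j))
    (hy : ∀ j : Fin m, σ (X (Sum.inr j)) = X (Sum.inr j) + X (Sum.inl j))
    (f : MvPolynomial (Fin m ⊕ Fin m) F) (hf : σ f = f) (a : Fin m → ℕ) :
    (coeff (Finsupp.equivFunOnFinite.symm
        (Sum.elim (fun _ : Fin m => 0) a)) f ≠ 0 →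
      ∀ i : Fin m, Even (a i)) ∧
    (coeff (Finsupp.equivFunOnFinite.symm
        (Sum.elim (fun i : Fin m => if i = (⟨m - 1, by omega⟩ : Fin m) then 1 else 0)
          (fun i : Fin m => if i = (⟨m - 1, by omega⟩ : Fin m) then 1 else a i))) f ≠ 0 →
      ∀ i : Fin m, i ≠ (⟨m - 1, by omega⟩ : Fin m) → Even (a i)) := by
  classical
  -- σ is an involution
  have sq : ∀ g, σ (σ g) = g := by
    have h2 : ∀ j : Fin m, (X (Sum.inl j) : MvPolynomial (Fin m ⊕ Fin m) F)
        + X (Sum.inl j) = 0 := fun j => CharTwo.add_self_eq_zero _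
    have hcomp : (σ.toAlgHom.comp σ.toAlgHom : MvPolynomial (Fin m ⊕ Fin m) F →ₐ[F] _)
        = AlgHom.id F _ := by
      apply MvPolynomial.algHom_ext
      rintro (j | j)
      · simp [hx]
      · simp only [AlgHom.coe_comp, AlgEquiv.toAlgHom_eq_coe, AlgHom.coe_coe,
          Function.comp_apply, AlgHom.coe_id, id_eq, hy, map_add]
        change σ (σ (X (Sum.inr j))) = X (Sum.inr j)
        rw [hy, map_add, hy, hx, add_assoc, h2, add_zero]
    intro g
    have := DFunLike.congr_fun hcomp g
    simpa using this
  -- key derivation identity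
  have key : ∀ (i : Fin m) (g : MvPolynomial (Fin m ⊕ Fin m) F),
      σ (pderiv (Sum.inl i) (σ g)) = pderiv (Sum.inl i) g + pderiv (Sum.inr i) g := by
    intro i g
    induction g using MvPolynomial.induction_on with
    | C a =>
      have hC : σ (C a) = C a := by
        rw [← MvPolynomial.algebraMap_eq]
        exact σ.commutes a
      simp [hC, pderiv_C]
    | add p q hp hq => simp only [map_add, hp, hq]; ring
    | mul_X p n hp =>
      have hXn : σ (pderiv (Sum.inl i) (σ (X n))) =
          pderiv (Sum.inl i) (X n) + pderiv (Sum.inr i) (X n) := by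
        rcases n with j | j
        · rw [hx]
          rcases eq_or_ne i j with rfl | hij
          · simp
          · rw [pderiv_X_of_ne (show Sum.inl j ≠ Sum.inl i by simpa using (Ne.symm hij)),
              pderiv_X_of_ne (show Sum.inl j ≠ Sum.inr i by simp)]
            simp
        · rw [hy, map_add]
          rcases eq_or_ne i j with rfl | hij
          · rw [pderiv_X_of_ne (show Sum.inr i ≠ Sum.inl i by simp), pderiv_X_self,
              pderiv_X_self]
            simp
          · rw [pderiv_X_of_ne (show Sum.inr j ≠ Sum.inl i by simp),
              pderiv_X_of_ne (show Sum.inl j ≠ Sum.inl i by simpa using (Ne.symm hij)),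
              pderiv_X_of_ne (show Sum.inr j ≠ Sum.inr i by simpa using (Ne.symm hij))]
            simp
      rw [map_mul σ, pderiv_mul, map_add, map_mul, map_mul, sq, sq, hXn, hp,
        pderiv_mul, pderiv_mul]
      ring
  -- the "set x = 0" algebra map
  set φ : MvPolynomial (Fin m ⊕ Fin m) F →ₐ[F] MvPolynomial (Fin m ⊕ Fin m) F :=
    aeval (Sum.elim (fun _ : Fin m => (0 : MvPolynomial (Fin m ⊕ Fin m) F))
      (fun j => X (Sum.inr j))) with hφ
  have hφσ : ∀ g, φ (σ g) = φ g := by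
    have hcomp : φ.comp σ.toAlgHom = φ := by
      apply MvPolynomial.algHom_ext
      rintro (j | j)
      · simp [hφ, hx]
      · simp [hφ, hy]
    intro g
    exact DFunLike.congr_fun hcomp g
  -- coefficient of a pure-y monomial is unchanged by φ
  have hφcoeff : ∀ (b : Fin m → ℕ) (g : MvPolynomial (Fin m ⊕ Fin m) F),
      coeff (Finsupp.equivFunOnFinite.symm (Sum.elim (fun _ : Fin m => 0) b)) (φ g)
        = coeff (Finsupp.equivFunOnFinite.symm (Sum.elim (fun _ : Fin m => 0) b)) g := by
    intro b g
    induction g using MvPolynomial.induction_on' with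
    | add p q hp hq => rw [map_add, coeff_add, coeff_add, hp, hq]
    | monomial d r =>
      by_cases hd : ∀ j : Fin m, d (Sum.inl j) = 0
      · have hid : φ (monomial d r) = monomial d r := by
          rw [hφ, aeval_monomial, monomial_eq]
          congr 1
          apply Finsupp.prod_congr
          intro n hn
          rcases n with j | j
          · exact absurd (hd j) (Finsupp.mem_support_iff.mp hn)
          · rfl
        rw [hid]
      · push_neg at hd
        obtain ⟨j, hj⟩ := hd
        have h1 : φ (monomial d r) = 0 := by
          rw [hφ, aeval_monomial]
          have hp0 : (d.prod fun n e =>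
              (Sum.elim (fun _ : Fin m => (0 : MvPolynomial (Fin m ⊕ Fin m) F))
                (fun j => X (Sum.inr j))) n ^ e) = 0 := by
            apply Finset.prod_eq_zero (Finsupp.mem_support_iff.mpr hj)
            simp [zero_pow hj]
          rw [hp0, mul_zero]
        have h2 : coeff (Finsupp.equivFunOnFinite.symm (Sum.elim (fun _ : Fin m => 0) b))
            (monomial d r) = 0 := by
          rw [coeff_monomial, if_neg]
          intro h
          apply hj
          rw [h]
          rfl
        rw [h1, h2, coeff_zero]
  -- invariance identity for f
  have inv1 : ∀ i : Fin m,
      σ (pderiv (Sum.inl i) f) = pderiv (Sum.inl i) f + pderiv (Sum.inr i) f := by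
    intro i
    have h := key i f
    rwa [hf] at h
  have id1 : ∀ i : Fin m, φ (pderiv (Sum.inr i) f) = 0 := by
    intro i
    have h := congrArg φ (inv1 i)
    rw [hφσ, map_add] at h
    exact (left_eq_add.mp h)
  -- parity from a coefficient-level equation
  have parity : ∀ (i : Fin m) (c : F), c ≠ 0 → 0 < a i →
      ((a i - 1 : ℕ) : F) + 1 = 0 ∨ c = 0 → Even (a i) := by
    intro i c hc hpos h
    rcases h with h | h
    · have hcast : ((a i : ℕ) : F) = 0 := by
        rw [show a i = (a i - 1) + 1 by omega]
        push_cast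
        exact h
      have hdvd : (2 : ℕ) ∣ a i := (CharP.cast_eq_zero_iff F 2 (a i)).mp hcast
      obtain ⟨k, hk⟩ := hdvd
      exact ⟨k, by omega⟩
    · exact absurd h hc
  constructor
  · -- part (i)
    intro hc i
    rcases Nat.eq_zero_or_pos (a i) with h0 | hpos
    · exact ⟨0, by omega⟩
    set b : Fin m → ℕ := fun j => if j = i then a i - 1 else a j with hb
    set ν : (Fin m ⊕ Fin m) →₀ ℕ :=
      Finsupp.equivFunOnFinite.symm (Sum.elim (fun _ : Fin m => 0) b) with hνdef
    have hνapp : ∀ n, ν n = Sum.elim (fun _ : Fin m => 0) b n := fun n => rfl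
    have hsum : ν + Finsupp.single (Sum.inr i) 1
        = Finsupp.equivFunOnFinite.symm (Sum.elim (fun _ : Fin m => 0) a) := by
      ext n
      have htar : (Finsupp.equivFunOnFinite.symm (Sum.elim (fun _ : Fin m => 0) a)) n
          = Sum.elim (fun _ : Fin m => 0) a n := rfl
      rw [Finsupp.add_apply, htar, hνapp, Finsupp.single_apply]
      rcases n with j | j
      · simp
      · simp only [Sum.elim_inr, hb]
        rcases eq_or_ne j i with rfl | hji
        · simp
          omega
        · simp [hji, Ne.symm hji]
    have h2 : coeff ν (φ (pderiv (Sum.inr i) f)) = 0 := by rw [id1 i, coeff_zero]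
    rw [hνdef, hφcoeff b, ← hνdef, coeff_pderiv_aux, hsum] at h2
    have hνi : ν (Sum.inr i) = a i - 1 := by rw [hνapp]; simp [hb]
    rw [hνi] at h2
    exact parity i _ hc hpos (mul_eq_zero.mp h2)
  · -- part (ii)
    intro hc i hiM
    rcases Nat.eq_zero_or_pos (a i) with h0 | hpos
    · exact ⟨0, by omega⟩
    have hiM' : i ≠ (⟨m - 1, by omega⟩ : Fin m) := hiM
    set M : Fin m := ⟨m - 1, by omega⟩ with hMdef
    have id2 : φ (pderiv (Sum.inl M) (pderiv (Sum.inr i) f))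
        = φ (pderiv (Sum.inr M) (pderiv (Sum.inl i) f)) := by
      have h := key M (pderiv (Sum.inl i) f)
      rw [inv1 i, map_add] at h
      have h2 := congrArg φ h
      rw [hφσ, map_add, map_add] at h2
      exact add_left_cancel h2
    set b : Fin m → ℕ := fun j => if j = M then 1 else if j = i then a i - 1 else a j with hb
    set ν : (Fin m ⊕ Fin m) →₀ ℕ :=
      Finsupp.equivFunOnFinite.symm (Sum.elim (fun _ : Fin m => 0) b) with hνdef
    have hνapp : ∀ n, ν n = Sum.elim (fun _ : Fin m => 0) b n := fun n => rfl
    set μ : (Fin m ⊕ Fin m) →₀ ℕ := Finsupp.equivFunOnFinite.symm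
        (Sum.elim (fun i : Fin m => if i = M then 1 else 0)
          (fun i : Fin m => if i = M then 1 else a i)) with hμdef
    have hμapp : ∀ n, μ n = Sum.elim (fun i : Fin m => if i = M then 1 else 0)
        (fun i : Fin m => if i = M then 1 else a i) n := fun n => rfl
    have hsum : ν + Finsupp.single (Sum.inl M) 1 + Finsupp.single (Sum.inr i) 1 = μ := by
      ext n
      rw [Finsupp.add_apply, Finsupp.add_apply, hμapp, hνapp,
        Finsupp.single_apply, Finsupp.single_apply]
      rcases n with j | j
      · simp only [Sum.elim_inl]
        rcases eq_or_ne j M with rfl | hjM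
        · simp
        · simp [hjM, Ne.symm hjM]
      · simp only [Sum.elim_inr, hb]
        rcases eq_or_ne j M with rfl | hjM
        · simp [hiM']
        · rcases eq_or_ne j i with rfl | hji
          · simp [hjM]
            omega
          · simp [hjM, hji, Ne.symm hji]
    have hL := congrArg (coeff ν) id2
    rw [hνdef, hφcoeff b, hφcoeff b, ← hνdef, coeff_pderiv_aux, coeff_pderiv_aux,
      coeff_pderiv_aux, coeff_pderiv_aux] at hL
    have hν1 : ν (Sum.inl M) = 0 := by rw [hνapp]; rfl
    have hν2 : ν (Sum.inr M) = 1 := by rw [hνapp]; simp [hb]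
    have hν3 : ((ν + Finsupp.single (Sum.inl M) 1 : (Fin m ⊕ Fin m) →₀ ℕ)) (Sum.inr i)
        = a i - 1 := by
      rw [Finsupp.add_apply, hνapp, Finsupp.single_apply]
      simp [hb, hiM']
    have htwo : (1 : F) + 1 = 0 := CharTwo.add_self_eq_zero 1
    rw [hsum, hν1, hν2, hν3] at hL
    simp only [Nat.cast_zero, Nat.cast_one, zero_add, htwo, zero_mul, one_mul] at hL
    exact parity i _ hc hpos (mul_eq_zero.mp hL)
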